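/- Let I be a nonempty finite index set and let (M_i)_{i∈I} be mutually independent nonnegative integrable random variables on a probability space with E[M_i] ≤ 1 for every i ∈ I. Then ∏_{i∈I} E[min(1, M_i)] ≤ E[min(1, ∏_{i∈I} M_i)] ≤ min_{i∈I} E[min(1, M_i)]. -/

import Mathlib

open MeasureTheory ProbabilityTheory

lemma aux_indep_prod {Ω : Type*} [MeasurableSpace Ω] (μ : Measure Ω) [IsProbabilityMeasure μ]
    {I : Type*} (M : I → Ω → ℝ) (hmeas : ∀ i, Measurable (M i))
    (hint : ∀ i, Integrable (M i) μ)
    (hind : iIndepFun M μ) (s : Finset I) :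
    Integrable (fun ω => ∏ i ∈ s, M i ω) μ ∧
      ∫ ω, ∏ i ∈ s, M i ω ∂μ = ∏ i ∈ s, ∫ ω, M i ω ∂μ := by
  classical
  induction s using Finset.induction_on with
  | empty => simp
  | @insert a s ha ih =>
    have hIndep : IndepFun (M a) (fun ω => ∏ j ∈ s, M j ω) μ := by
      have := (hind.indepFun_finsetProd_of_notMem hmeas ha).symm
      rwa [Finset.prod_fn] at this
    have hmul : Integrable (fun ω => M a ω * ∏ i ∈ s, M i ω) μ :=
      hIndep.integrable_mul (hint a) ih.1
    have heq : ∫ ω, M a ω * ∏ i ∈ s, M i ω ∂μ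
        = (∫ ω, M a ω ∂μ) * ∫ ω, ∏ i ∈ s, M i ω ∂μ :=
      hIndep.integral_mul_eq_mul_integral (hint a).aestronglyMeasurable ih.1.aestronglyMeasurable
    constructor
    · simpa only [Finset.prod_insert ha] using hmul
    · simp only [Finset.prod_insert ha]
      rw [heq, ih.2]

/-- For mutually independent nonnegative integrable random variables `M i` with
`E[M i] ≤ 1`, one has
`∏ i, E[min(1, M i)] ≤ E[min(1, ∏ i, M i)] ≤ min_i E[min(1, M i)]`. -/
theorem prod_min_one_expectation_bounds
    {Ω : Type*} [MeasurableSpace Ω] (μ : Measure Ω) [IsProbabilityMeasure μ]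
    {I : Type*} [Fintype I] [Nonempty I]
    (M : I → Ω → ℝ) (hmeas : ∀ i, Measurable (M i))
    (hnonneg : ∀ i ω, 0 ≤ M i ω) (hint : ∀ i, Integrable (M i) μ)
    (hE : ∀ i, ∫ ω, M i ω ∂μ ≤ 1)
    (hind : iIndepFun M μ) :
    (∏ i, ∫ ω, min 1 (M i ω) ∂μ) ≤ ∫ ω, min 1 (∏ i, M i ω) ∂μ ∧
      ∫ ω, min 1 (∏ i, M i ω) ∂μ ≤
        Finset.univ.inf' Finset.univ_nonempty (fun i => ∫ ω, min 1 (M i ω) ∂μ) := by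
  classical
  set N : I → Ω → ℝ := fun i ω => min 1 (M i ω) with hN
  have hNmeas : ∀ i, Measurable (N i) := fun i => measurable_const.min (hmeas i)
  have hNnn : ∀ i ω, 0 ≤ N i ω := fun i ω => le_min zero_le_one (hnonneg i ω)
  have hNle1 : ∀ i ω, N i ω ≤ 1 := fun i ω => min_le_left _ _
  have hNint : ∀ i, Integrable (N i) μ := fun i =>
    (integrable_const (1 : ℝ)).mono' (hNmeas i).aestronglyMeasurable
      (Filter.Eventually.of_forall fun ω => by
        rw [Real.norm_eq_abs, abs_of_nonneg (hNnn i ω)]; exact hNle1 i ω)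
  have hNind : iIndepFun N μ :=
    hind.comp (fun _ => fun x => min 1 x) (fun _ => measurable_const.min measurable_id)
  -- measurability/integrability of the main integrand
  have hPmeas : Measurable (fun ω => min 1 (∏ i, M i ω)) :=
    measurable_const.min (Finset.measurable_prod _ fun i _ => hmeas i)
  have hPnn : ∀ ω, 0 ≤ min 1 (∏ i, M i ω) := fun ω =>
    le_min zero_le_one (Finset.prod_nonneg fun i _ => hnonneg i ω)
  have hPint : Integrable (fun ω => min 1 (∏ i, M i ω)) μ :=
    (integrable_const (1 : ℝ)).mono' hPmeas.aestronglyMeasurable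
      (Filter.Eventually.of_forall fun ω => by
        rw [Real.norm_eq_abs, abs_of_nonneg (hPnn ω)]; exact min_le_left _ _)
  constructor
  · -- lower bound
    have haux := aux_indep_prod μ N hNmeas hNint hNind Finset.univ
    rw [← haux.2]
    refine integral_mono haux.1 hPint fun ω => ?_
    exact le_min (Finset.prod_le_one (fun i _ => hNnn i ω) (fun i _ => hNle1 i ω))
      (Finset.prod_le_prod (fun i _ => hNnn i ω) (fun i _ => min_le_right _ _))
  · -- upper bound
    refine Finset.le_inf' _ _ fun j _ => ?_
    set P : Ω → ℝ := fun ω => ∏ i ∈ Finset.univ.erase j, M i ω with hP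
    have hPm : Measurable P := Finset.measurable_prod _ fun i _ => hmeas i
    have hPn : ∀ ω, 0 ≤ P ω := fun ω => Finset.prod_nonneg fun i _ => hnonneg i ω
    have haux := aux_indep_prod μ M hmeas hint hind (Finset.univ.erase j)
    have hPIntegrable : Integrable P μ := haux.1
    have hPE : ∫ ω, P ω ∂μ ≤ 1 := by
      rw [hP]; rw [haux.2]
      exact Finset.prod_le_one (fun i _ => integral_nonneg fun ω => hnonneg i ω)
        (fun i _ => hE i)
    have hPE0 : 0 ≤ ∫ ω, P ω ∂μ := integral_nonneg hPn
    have hIndepMP : IndepFun (M j) P μ := by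
      have := (hind.indepFun_finsetProd_of_notMem hmeas
        (Finset.notMem_erase j Finset.univ)).symm
      rwa [Finset.prod_fn] at this
    -- the splitting functions
    set φg : ℝ → ℝ := fun x => if x ≤ 1 then x else 0 with hφg
    set φh : ℝ → ℝ := fun x => if x ≤ 1 then 0 else 1 with hφh
    have hφgm : Measurable φg :=
      Measurable.ite (measurableSet_le measurable_id measurable_const)
        measurable_id measurable_const
    have hφhm : Measurable φh :=
      Measurable.ite (measurableSet_le measurable_id measurable_const)
        measurable_const measurable_const
    set g : Ω → ℝ := fun ω => φg (M j ω) with hg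
    set h : Ω → ℝ := fun ω => φh (M j ω) with hh
    have hgm : Measurable g := hφgm.comp (hmeas j)
    have hhm : Measurable h := hφhm.comp (hmeas j)
    have hgnn : ∀ ω, 0 ≤ g ω := fun ω => by
      simp only [hg, hφg]; split <;> [exact hnonneg j ω; exact le_refl 0]
    have hgle1 : ∀ ω, g ω ≤ 1 := fun ω => by
      simp only [hg, hφg]; split <;> [assumption; exact zero_le_one]
    have hhnn : ∀ ω, 0 ≤ h ω := fun ω => by
      simp only [hh, hφh]; split <;> [exact le_refl 0; exact zero_le_one]
    have hhle1 : ∀ ω, h ω ≤ 1 := fun ω => by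
      simp only [hh, hφh]; split <;> [exact zero_le_one; exact le_refl 1]
    have hghsum : ∀ ω, g ω + h ω = N j ω := fun ω => by
      simp only [hg, hh, hφg, hφh, hN]
      split
      · rename_i hle; rw [min_eq_right hle]; ring
      · rename_i hgt; rw [min_eq_left (le_of_not_ge hgt)]; ring
    have hIndepgP : IndepFun g P μ := by
      have := hIndepMP.comp hφgm measurable_id
      exact this
    have hgPint : Integrable (fun ω => g ω * P ω) μ :=
      hPIntegrable.mono' ((hgm.mul hPm)).aestronglyMeasurable
        (Filter.Eventually.of_forall fun ω => by
          rw [Real.norm_eq_abs, abs_of_nonneg (mul_nonneg (hgnn ω) (hPn ω))]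
          calc g ω * P ω ≤ 1 * P ω :=
                mul_le_mul_of_nonneg_right (hgle1 ω) (hPn ω)
            _ = P ω := one_mul _)
    have hhint : Integrable h μ :=
      (integrable_const (1 : ℝ)).mono' hhm.aestronglyMeasurable
        (Filter.Eventually.of_forall fun ω => by
          rw [Real.norm_eq_abs, abs_of_nonneg (hhnn ω)]; exact hhle1 ω)
    have hgint : Integrable g μ :=
      (integrable_const (1 : ℝ)).mono' hgm.aestronglyMeasurable
        (Filter.Eventually.of_forall fun ω => by
          rw [Real.norm_eq_abs, abs_of_nonneg (hgnn ω)]; exact hgle1 ω)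
    -- pointwise bound
    have hpoint : ∀ ω, min 1 (∏ i, M i ω) ≤ g ω * P ω + h ω := fun ω => by
      have hfac : ∏ i, M i ω = M j ω * P ω :=
        (Finset.mul_prod_erase Finset.univ (fun i => M i ω) (Finset.mem_univ j)).symm
      simp only [hg, hh, hφg, hφh]
      split
      · rename_i hle
        rw [hfac, add_zero]
        exact min_le_right _ _
      · rename_i hgt
        rw [zero_mul, zero_add]
        exact min_le_left _ _
    calc ∫ ω, min 1 (∏ i, M i ω) ∂μ
        ≤ ∫ ω, (g ω * P ω + h ω) ∂μ :=
          integral_mono hPint (hgPint.add hhint) hpoint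
      _ = (∫ ω, g ω * P ω ∂μ) + ∫ ω, h ω ∂μ := integral_add hgPint hhint
      _ = (∫ ω, g ω ∂μ) * (∫ ω, P ω ∂μ) + ∫ ω, h ω ∂μ := by
          have hm := hIndepgP.integral_mul_eq_mul_integral hgint.aestronglyMeasurable hPIntegrable.aestronglyMeasurable
          exact congrArg (fun z => z + ∫ ω, h ω ∂μ) hm
      _ ≤ (∫ ω, g ω ∂μ) * 1 + ∫ ω, h ω ∂μ := by
          have : 0 ≤ ∫ ω, g ω ∂μ := integral_nonneg hgnn
          nlinarith
      _ = ∫ ω, (g ω + h ω) ∂μ := by rw [mul_one, integral_add hgint hhint]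
      _ = ∫ ω, N j ω ∂μ := by
          congr 1; funext ω; exact hghsum ω
      _ = ∫ ω, min 1 (M j ω) ∂μ := rfl
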